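/- For integers n ≥ 0 and k ∈ ℤ, define Z_{n,k} : ℂ → ℂ by Z_{n,k}(z) = ((-1)^n/(2π))·∫₀^{2π} e^{i(n-2k)θ}·W_n(Im(e^{iθ}·conj(z))) dθ. Then Z_{n,k} is real-differentiable, and writing ∂_z = (1/2)(∂_x - i∂_y) and ∂_{z̄} = (1/2)(∂_x + i∂_y) for the Wirtinger derivatives with respect to z = x+iy: (i) ∂_{z̄} Z_{n,0} = 0 identically; (ii) ∂_z Z_{n,k} + ∂_{z̄} Z_{n,k+1} = 0 identically for every 0 ≤ k ≤ n-1; (iii) ∂_z Z_{n,n} = 0 identically. -/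

import Mathlib

open Real Complex intervalIntegral MeasureTheory Metric

/-- The polynomials `W_n(t) = iⁿ U_n(t)` (`U_n` the Chebyshev polynomials of the second kind):
`W₀(t) = 1`, `W₁(t) = 2it`, `W_{n+2}(t) = 2it W_{n+1}(t) + W_n(t)`. -/
noncomputable def W : ℕ → ℂ → ℂ
  | 0, _ => 1
  | 1, t => 2 * Complex.I * t
  | (n + 2), t => 2 * Complex.I * t * W (n + 1) t + W n t

noncomputable def W' : ℕ → ℂ → ℂ
  | 0, _ => 0
  | 1, _ => 2 * Complex.I
  | (n + 2), t => 2 * Complex.I * W (n + 1) t + 2 * Complex.I * t * W' (n + 1) t + W' n t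

lemma hasDerivAt_W : ∀ (n : ℕ) (t : ℂ), HasDerivAt (W n) (W' n t) t := by
  intro n
  induction n using Nat.strong_induction_on with
  | _ n ih =>
    match n with
    | 0 => intro t; simpa [W, W'] using hasDerivAt_const t (1 : ℂ)
    | 1 =>
      intro t
      simpa [W, W'] using (hasDerivAt_id t).const_mul (2 * Complex.I)
    | (n + 2) =>
      intro t
      have h1 := ih (n + 1) (by omega) t
      have h0 := ih n (by omega) t
      have hmul : HasDerivAt (fun t => 2 * Complex.I * t * W (n + 1) t)
          (2 * Complex.I * W (n + 1) t + 2 * Complex.I * t * W' (n + 1) t) t := by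
        have := ((hasDerivAt_id t).const_mul (2 * Complex.I)).fun_mul h1
        refine this.congr_deriv ?_
        simp only [id_eq]; ring
      simpa [W, W'] using hmul.fun_add h0

lemma continuous_W (n : ℕ) : Continuous (W n) :=
  continuous_iff_continuousAt.2 fun t => (hasDerivAt_W n t).differentiableAt.continuousAt

lemma continuous_W' : ∀ n : ℕ, Continuous (W' n) := by
  intro n
  induction n using Nat.strong_induction_on with
  | _ n ih =>
    match n with
    | 0 => simpa [W'] using continuous_const
    | 1 => simpa [W'] using continuous_const
    | (n + 2) =>
      have h1 := ih (n + 1) (by omega)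
      have h0 := ih n (by omega)
      show Continuous fun t => 2 * Complex.I * W (n + 1) t + 2 * Complex.I * t * W' (n + 1) t + W' n t
      exact ((continuous_const.mul (continuous_W (n+1))).add
        ((continuous_const.mul continuous_id).mul h1)).add h0

lemma intExp (m : ℤ) (hm : m ≠ 0) :
    ∫ θ in (0:ℝ)..(2*π), Complex.exp (Complex.I * m * θ) = 0 := by
  have h : (fun θ : ℝ => Complex.exp (Complex.I * m * θ)) =
      fun θ : ℝ => Complex.exp ((Complex.I * m) * θ) := by
    funext θ; ring_nf
  have hc : (Complex.I * (m:ℂ)) ≠ 0 := by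
    simp [Complex.I_ne_zero, hm]
  rw [h, integral_exp_mul_complex hc]
  have : Complex.exp (Complex.I * m * (2*π)) = 1 := by
    have := Complex.exp_int_mul_two_pi_mul_I m
    rw [← this]; ring_nf
  simp [this]

/-- abbreviation for the inner function -/
noncomputable def hW (n : ℕ) (z : ℂ) (θ : ℝ) : ℂ :=
  W n (((Complex.exp (Complex.I * θ) * (starRingEnd ℂ) z).im : ℝ) : ℂ)

noncomputable def hW' (n : ℕ) (z : ℂ) (θ : ℝ) : ℂ :=
  W' n (((Complex.exp (Complex.I * θ) * (starRingEnd ℂ) z).im : ℝ) : ℂ)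

lemma cont_inner (z : ℂ) :
    Continuous fun θ : ℝ => (((Complex.exp (Complex.I * θ) * (starRingEnd ℂ) z).im : ℝ) : ℂ) := by
  refine Complex.continuous_ofReal.comp (Complex.continuous_im.comp ?_)
  exact (Complex.continuous_exp.comp (continuous_const.mul Complex.continuous_ofReal)).mul
    continuous_const

lemma cont_hW (n : ℕ) (z : ℂ) : Continuous (hW n z) :=
  (continuous_W n).comp (cont_inner z)

lemma cont_hW' (n : ℕ) (z : ℂ) : Continuous (hW' n z) :=
  (continuous_W' n).comp (cont_inner z)

lemma cont_expI (c : ℂ) : Continuous fun θ : ℝ => Complex.exp (Complex.I * c * θ) :=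
  Complex.continuous_exp.comp (continuous_const.mul Complex.continuous_ofReal)

lemma conj_exp_mul (z : ℂ) (θ : ℝ) :
    (starRingEnd ℂ) (Complex.exp (Complex.I * θ) * (starRingEnd ℂ) z)
      = Complex.exp (-(Complex.I * θ)) * z := by
  rw [map_mul, Complex.conj_conj, ← Complex.exp_conj]
  congr 1
  simp

lemma twoI_im (w : ℂ) : 2 * Complex.I * ((w.im : ℝ) : ℂ) = w - (starRingEnd ℂ) w := by
  rw [Complex.sub_conj]
  push_cast
  ring

lemma exp_shift (m : ℤ) (θ : ℝ) :
    Complex.exp (Complex.I * ((m:ℂ) + 1) * θ)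
      = Complex.exp (Complex.I * m * θ) * Complex.exp (Complex.I * θ) := by
  rw [← Complex.exp_add]; ring_nf

lemma exp_shift' (m : ℤ) (θ : ℝ) :
    Complex.exp (Complex.I * ((m:ℂ) - 1) * θ)
      = Complex.exp (Complex.I * m * θ) * Complex.exp (-(Complex.I * θ)) := by
  rw [← Complex.exp_add]; ring_nf

lemma intW : ∀ (n : ℕ) (z : ℂ) (m : ℤ), (n : ℤ) < |m| →
    (∫ θ in (0:ℝ)..(2*π), Complex.exp (Complex.I * m * θ) * hW n z θ) = 0 := by
  intro n
  induction n using Nat.strong_induction_on with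
  | _ n ih =>
    match n with
    | 0 =>
      intro z m hm
      have hm0 : m ≠ 0 := by rcases abs_cases m with ⟨h1,h2⟩|⟨h1,h2⟩ <;> rcases abs_cases (m+1) with ⟨h3,h4⟩|⟨h3,h4⟩ <;> rcases abs_cases (m-1) with ⟨h5,h6⟩|⟨h5,h6⟩ <;> omega
      simpa [hW, W] using intExp m hm0
    | 1 =>
      intro z m hm
      have key : ∀ θ : ℝ, Complex.exp (Complex.I * m * θ) * hW 1 z θ =
          (starRingEnd ℂ) z * Complex.exp (Complex.I * ((m:ℂ) + 1) * θ)
            - z * Complex.exp (Complex.I * ((m:ℂ) - 1) * θ) := by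
        intro θ
        have h2 := twoI_im (Complex.exp (Complex.I * θ) * (starRingEnd ℂ) z)
        rw [conj_exp_mul] at h2
        rw [exp_shift, exp_shift']
        simp only [hW]
        show Complex.exp (Complex.I * m * θ) *
            (2 * Complex.I * (((Complex.exp (Complex.I * θ) * (starRingEnd ℂ) z).im : ℝ) : ℂ)) = _
        rw [h2]; ring
      rw [intervalIntegral.integral_congr (fun θ _ => key θ)]
      rw [intervalIntegral.integral_sub
          ((continuous_const.fun_mul (cont_expI _)).intervalIntegrable _ _)
          ((continuous_const.fun_mul (cont_expI _)).intervalIntegrable _ _),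
        intervalIntegral.integral_const_mul, intervalIntegral.integral_const_mul]
      have e1 : ((m:ℂ) + 1) = ((m+1 : ℤ) : ℂ) := by push_cast; ring
      have e2 : ((m:ℂ) - 1) = ((m-1 : ℤ) : ℂ) := by push_cast; ring
      rw [e1, e2, intExp (m+1) (by rcases abs_cases m with ⟨h1,h2⟩|⟨h1,h2⟩ <;> rcases abs_cases (m+1) with ⟨h3,h4⟩|⟨h3,h4⟩ <;> rcases abs_cases (m-1) with ⟨h5,h6⟩|⟨h5,h6⟩ <;> omega), intExp (m-1) (by rcases abs_cases m with ⟨h1,h2⟩|⟨h1,h2⟩ <;> rcases abs_cases (m+1) with ⟨h3,h4⟩|⟨h3,h4⟩ <;> rcases abs_cases (m-1) with ⟨h5,h6⟩|⟨h5,h6⟩ <;> omega)]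
      ring
    | (n + 2) =>
      intro z m hm
      have key : ∀ θ : ℝ, Complex.exp (Complex.I * m * θ) * hW (n+2) z θ =
          ((starRingEnd ℂ) z * (Complex.exp (Complex.I * ((m:ℂ) + 1) * θ) * hW (n+1) z θ)
            - z * (Complex.exp (Complex.I * ((m:ℂ) - 1) * θ) * hW (n+1) z θ))
          + Complex.exp (Complex.I * m * θ) * hW n z θ := by
        intro θ
        have h2 := twoI_im (Complex.exp (Complex.I * θ) * (starRingEnd ℂ) z)
        rw [conj_exp_mul] at h2
        rw [exp_shift, exp_shift']
        simp only [hW]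
        show Complex.exp (Complex.I * m * θ) *
            (2 * Complex.I * _ * W (n+1) _ + W n _) = _
        rw [mul_add, ← mul_assoc (Complex.exp (Complex.I * m * θ)),
          mul_comm (Complex.exp (Complex.I * m * θ)) (2 * Complex.I * _), mul_assoc _ _ (W (n+1) _)]
        rw [h2]; ring
      rw [intervalIntegral.integral_congr (fun θ _ => key θ)]
      rw [intervalIntegral.integral_add
          (((continuous_const.fun_mul ((cont_expI _).fun_mul (cont_hW _ z))).fun_sub
            (continuous_const.fun_mul ((cont_expI _).fun_mul (cont_hW _ z)))).intervalIntegrable _ _)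
          (((cont_expI _).fun_mul (cont_hW _ z)).intervalIntegrable _ _),
        intervalIntegral.integral_sub
          ((continuous_const.fun_mul ((cont_expI _).fun_mul (cont_hW _ z))).intervalIntegrable _ _)
          ((continuous_const.fun_mul ((cont_expI _).fun_mul (cont_hW _ z))).intervalIntegrable _ _),
        intervalIntegral.integral_const_mul, intervalIntegral.integral_const_mul]
      have e1 : ((m:ℂ) + 1) = ((m+1 : ℤ) : ℂ) := by push_cast; ring
      have e2 : ((m:ℂ) - 1) = ((m-1 : ℤ) : ℂ) := by push_cast; ring
      rw [e1, e2, ih (n+1) (by rcases abs_cases m with ⟨h1,h2⟩|⟨h1,h2⟩ <;> rcases abs_cases (m+1) with ⟨h3,h4⟩|⟨h3,h4⟩ <;> rcases abs_cases (m-1) with ⟨h5,h6⟩|⟨h5,h6⟩ <;> omega) z (m+1) (by rcases abs_cases m with ⟨h1,h2⟩|⟨h1,h2⟩ <;> rcases abs_cases (m+1) with ⟨h3,h4⟩|⟨h3,h4⟩ <;> rcases abs_cases (m-1) with ⟨h5,h6⟩|⟨h5,h6⟩ <;> omega), ih (n+1) (by rcases abs_cases m with ⟨h1,h2⟩|⟨h1,h2⟩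 <;> rcases abs_cases (m+1) with ⟨h3,h4⟩|⟨h3,h4⟩ <;> rcases abs_cases (m-1) with ⟨h5,h6⟩|⟨h5,h6⟩ <;> omega) z (m-1) (by rcases abs_cases m with ⟨h1,h2⟩|⟨h1,h2⟩ <;> rcases abs_cases (m+1) with ⟨h3,h4⟩|⟨h3,h4⟩ <;> rcases abs_cases (m-1) with ⟨h5,h6⟩|⟨h5,h6⟩ <;> omega),
        ih n (by rcases abs_cases m with ⟨h1,h2⟩|⟨h1,h2⟩ <;> rcases abs_cases (m+1) with ⟨h3,h4⟩|⟨h3,h4⟩ <;> rcases abs_cases (m-1) with ⟨h5,h6⟩|⟨h5,h6⟩ <;> omega) z m (by rcases abs_cases m with ⟨h1,h2⟩|⟨h1,h2⟩ <;> rcases abs_cases (m+1) with ⟨h3,h4⟩|⟨h3,h4⟩ <;> rcases abs_cases (m-1) with ⟨h5,h6⟩|⟨h5,h6⟩ <;> omega)]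
      ring

lemma intW' : ∀ (n : ℕ) (z : ℂ) (m : ℤ), (n : ℤ) ≤ |m| →
    (∫ θ in (0:ℝ)..(2*π), Complex.exp (Complex.I * m * θ) * hW' n z θ) = 0 := by
  intro n
  induction n using Nat.strong_induction_on with
  | _ n ih =>
    match n with
    | 0 =>
      intro z m _
      simp [hW', W']
    | 1 =>
      intro z m hm
      have hm0 : m ≠ 0 := by rcases abs_cases m with ⟨h1,h2⟩|⟨h1,h2⟩ <;> omega
      have : ∀ θ : ℝ, Complex.exp (Complex.I * m * θ) * hW' 1 z θ =
          2 * Complex.I * Complex.exp (Complex.I * m * θ) := by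
        intro θ; simp only [hW', W']; ring
      rw [intervalIntegral.integral_congr (fun θ _ => this θ),
        intervalIntegral.integral_const_mul, intExp m hm0]
      ring
    | (n + 2) =>
      intro z m hm
      have key : ∀ θ : ℝ, Complex.exp (Complex.I * m * θ) * hW' (n+2) z θ =
          (2 * Complex.I * (Complex.exp (Complex.I * m * θ) * hW (n+1) z θ)
            + ((starRingEnd ℂ) z * (Complex.exp (Complex.I * ((m:ℂ) + 1) * θ) * hW' (n+1) z θ)
              - z * (Complex.exp (Complex.I * ((m:ℂ) - 1) * θ) * hW' (n+1) z θ)))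
          + Complex.exp (Complex.I * m * θ) * hW' n z θ := by
        intro θ
        have h2 := twoI_im (Complex.exp (Complex.I * θ) * (starRingEnd ℂ) z)
        rw [conj_exp_mul] at h2
        rw [exp_shift, exp_shift']
        simp only [hW', hW]
        show Complex.exp (Complex.I * m * θ) *
            (2 * Complex.I * W (n+1) _ + 2 * Complex.I * _ * W' (n+1) _ + W' n _) = _
        rw [mul_add, mul_add, ← mul_assoc (Complex.exp (Complex.I * m * θ)) (2 * Complex.I * _),
          mul_comm (Complex.exp (Complex.I * m * θ)) (2 * Complex.I * _),
          mul_assoc _ _ (W' (n+1) _), h2]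
        ring
      rw [intervalIntegral.integral_congr (fun θ _ => key θ)]
      rw [intervalIntegral.integral_add
          (((continuous_const.fun_mul ((cont_expI _).fun_mul (cont_hW (n+1) z))).fun_add
            ((continuous_const.fun_mul ((cont_expI _).fun_mul (cont_hW' (n+1) z))).fun_sub
              (continuous_const.fun_mul ((cont_expI _).fun_mul (cont_hW' (n+1) z))))).intervalIntegrable _ _)
          (((cont_expI _).fun_mul (cont_hW' n z)).intervalIntegrable _ _),
        intervalIntegral.integral_add
          ((continuous_const.fun_mul ((cont_expI _).fun_mul (cont_hW (n+1) z))).intervalIntegrable _ _)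
          (((continuous_const.fun_mul ((cont_expI _).fun_mul (cont_hW' (n+1) z))).fun_sub
            (continuous_const.fun_mul ((cont_expI _).fun_mul (cont_hW' (n+1) z)))).intervalIntegrable _ _),
        intervalIntegral.integral_sub
          ((continuous_const.fun_mul ((cont_expI _).fun_mul (cont_hW' (n+1) z))).intervalIntegrable _ _)
          ((continuous_const.fun_mul ((cont_expI _).fun_mul (cont_hW' (n+1) z))).intervalIntegrable _ _),
        intervalIntegral.integral_const_mul, intervalIntegral.integral_const_mul,
        intervalIntegral.integral_const_mul]
      have e1 : ((m:ℂ) + 1) = ((m+1 : ℤ) : ℂ) := by push_cast; ring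
      have e2 : ((m:ℂ) - 1) = ((m-1 : ℤ) : ℂ) := by push_cast; ring
      rw [e1, e2,
        intW (n+1) z m (by rcases abs_cases m with ⟨h1,h2⟩|⟨h1,h2⟩ <;> omega),
        ih (n+1) (by omega) z (m+1)
          (by rcases abs_cases m with ⟨h1,h2⟩|⟨h1,h2⟩ <;> rcases abs_cases (m+1) with ⟨h3,h4⟩|⟨h3,h4⟩ <;> omega),
        ih (n+1) (by omega) z (m-1)
          (by rcases abs_cases m with ⟨h1,h2⟩|⟨h1,h2⟩ <;> rcases abs_cases (m-1) with ⟨h3,h4⟩|⟨h3,h4⟩ <;> omega),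
        ih n (by omega) z m (by rcases abs_cases m with ⟨h1,h2⟩|⟨h1,h2⟩ <;> omega)]
      ring

/-- The ℝ-linear map `z ↦ ((e^{iθ} conj z).im : ℂ)`. -/
noncomputable def Lmap (θ : ℝ) : ℂ →L[ℝ] ℂ :=
  (Complex.ofRealCLM.comp Complex.imCLM).comp
    (((ContinuousLinearMap.mul ℝ ℂ) (Complex.exp (Complex.I * θ))).comp
      (Complex.conjCLE : ℂ ≃L[ℝ] ℂ).toContinuousLinearMap)

lemma Lmap_apply (θ : ℝ) (z : ℂ) :
    Lmap θ z = (((Complex.exp (Complex.I * θ) * (starRingEnd ℂ) z).im : ℝ) : ℂ) := rfl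

lemma Lmap_norm_le (θ : ℝ) : ‖Lmap θ‖ ≤ 1 := by
  refine ContinuousLinearMap.opNorm_le_bound _ zero_le_one fun z => ?_
  rw [Lmap_apply, one_mul]
  have h1 : ‖(((Complex.exp (Complex.I * θ) * (starRingEnd ℂ) z).im : ℝ) : ℂ)‖
      = |(Complex.exp (Complex.I * θ) * (starRingEnd ℂ) z).im| := by
    rw [Complex.norm_real, Real.norm_eq_abs]
  rw [h1]
  calc |(Complex.exp (Complex.I * θ) * (starRingEnd ℂ) z).im|
      ≤ ‖Complex.exp (Complex.I * θ) * (starRingEnd ℂ) z‖ := Complex.abs_im_le_norm _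
    _ = ‖z‖ := by
        rw [norm_mul]
        have : ‖Complex.exp (Complex.I * θ)‖ = 1 := by
          rw [mul_comm, Complex.norm_exp_ofReal_mul_I]
        simp [this]

lemma cont_Lmap : Continuous fun θ : ℝ => Lmap θ := by
  have h1 : Continuous fun θ : ℝ =>
      (ContinuousLinearMap.mul ℝ ℂ) (Complex.exp (Complex.I * θ)) :=
    (ContinuousLinearMap.mul ℝ ℂ).continuous.comp
      (Complex.continuous_exp.comp (continuous_const.mul Complex.continuous_ofReal))
  exact ((ContinuousLinearMap.compL ℝ ℂ ℂ ℂ (Complex.ofRealCLM.comp Complex.imCLM)).continuous).comp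
    ((((ContinuousLinearMap.compL ℝ ℂ ℂ ℂ).flip
        (Complex.conjCLE : ℂ ≃L[ℝ] ℂ).toContinuousLinearMap).continuous).comp h1)

lemma hasFDerivAt_inner (n : ℕ) (θ : ℝ) (x : ℂ) :
    HasFDerivAt (fun z => W n (Lmap θ z)) ((W' n (Lmap θ x)) • Lmap θ) x := by
  have hW := (hasDerivAt_W n (Lmap θ x)).hasFDerivAt.restrictScalars ℝ
  have := hW.comp x (Lmap θ).hasFDerivAt
  refine this.congr_fderiv ?_
  ext v
  simp [ContinuousLinearMap.smul_apply, ContinuousLinearMap.comp_apply]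
  ring

/-- The Zernike functions
`Z_{n,k}(z) = ((-1)^n/(2π)) ∫₀^{2π} e^{i(n-2k)θ} W_n(Im(e^{iθ} conj z)) dθ`. -/
noncomputable def Znk (n : ℕ) (k : ℤ) (z : ℂ) : ℂ :=
  ((-1 : ℂ) ^ n / (2 * π)) *
    ∫ θ in (0 : ℝ)..(2 * π),
      Complex.exp (Complex.I * ((n : ℂ) - 2 * k) * θ) *
        W n (((Complex.exp (Complex.I * θ) * (starRingEnd ℂ) z).im : ℝ) : ℂ)

/-- The Wirtinger derivative `∂_z f = (1/2)(∂_x f - i ∂_y f)` of `f : ℂ → ℂ`, taken in the sense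
of the real Fréchet derivative. -/
noncomputable def wirtingerZ (f : ℂ → ℂ) (z : ℂ) : ℂ :=
  (1 / 2) * (fderiv ℝ f z 1 - Complex.I * fderiv ℝ f z Complex.I)

/-- The Wirtinger derivative `∂_z̄ f = (1/2)(∂_x f + i ∂_y f)` of `f : ℂ → ℂ`, taken in the sense
of the real Fréchet derivative. -/
noncomputable def wirtingerZbar (f : ℂ → ℂ) (z : ℂ) : ℂ :=
  (1 / 2) * (fderiv ℝ f z 1 + Complex.I * fderiv ℝ f z Complex.I)

lemma abs_expI (m : ℤ) (θ : ℝ) : ‖Complex.exp (Complex.I * m * θ)‖ = 1 := by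
  have h : Complex.I * m * θ = ((m * θ : ℝ) : ℂ) * Complex.I := by push_cast; ring
  rw [h, Complex.norm_exp_ofReal_mul_I]

lemma cont_LmapApply (x : ℂ) : Continuous fun θ : ℝ => Lmap θ x := by
  simp only [Lmap_apply]
  exact cont_inner x

lemma cont_WLmap (n : ℕ) (x : ℂ) : Continuous fun θ : ℝ => W n (Lmap θ x) :=
  (continuous_W n).comp (cont_LmapApply x)

lemma cont_W'Lmap (n : ℕ) (x : ℂ) : Continuous fun θ : ℝ => W' n (Lmap θ x) :=
  (continuous_W' n).comp (cont_LmapApply x)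

lemma hasFDerivAt_intZ (n : ℕ) (m : ℤ) (x₀ : ℂ) :
    HasFDerivAt (fun x => ∫ θ in (0:ℝ)..(2*π),
        Complex.exp (Complex.I * m * θ) * W n (Lmap θ x))
      (∫ θ in (0:ℝ)..(2*π),
        (Complex.exp (Complex.I * m * θ) * W' n (Lmap θ x₀)) • Lmap θ) x₀ := by
  obtain ⟨C, hC⟩ := (isCompact_closedBall (0:ℂ) (‖x₀‖+1)).exists_bound_of_continuousOn
    (continuous_W' n).continuousOn
  apply hasFDerivAt_integral_of_dominated_of_fderiv_le''
    (F' := fun x θ => (Complex.exp (Complex.I * m * θ) * W' n (Lmap θ x)) • Lmap θ)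
    (bound := fun _ => C) (s := ball x₀ 1) (ball_mem_nhds x₀ one_pos)
  · filter_upwards with x
    exact (((cont_expI _).mul (cont_WLmap n x)).aestronglyMeasurable).restrict
  · exact ((cont_expI _).mul (cont_WLmap n x₀)).intervalIntegrable _ _
  · exact ((((cont_expI _).mul (cont_W'Lmap n x₀)).smul cont_Lmap).aestronglyMeasurable).restrict
  · refine Filter.Eventually.of_forall fun θ => fun x hx => ?_
    have hLx : ‖Lmap θ x‖ ≤ ‖x‖ := by
      calc ‖Lmap θ x‖ ≤ ‖Lmap θ‖ * ‖x‖ := (Lmap θ).le_opNorm x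
        _ ≤ 1 * ‖x‖ := by
            exact mul_le_mul_of_nonneg_right (Lmap_norm_le θ) (norm_nonneg x)
        _ = ‖x‖ := one_mul _
    have hxball : Lmap θ x ∈ closedBall (0:ℂ) (‖x₀‖+1) := by
      rw [mem_closedBall, dist_zero_right]
      have : ‖x‖ ≤ ‖x₀‖ + 1 := by
        have := mem_ball_iff_norm.mp hx
        calc ‖x‖ = ‖x₀ + (x - x₀)‖ := by ring_nf
          _ ≤ ‖x₀‖ + ‖x - x₀‖ := norm_add_le _ _
          _ ≤ ‖x₀‖ + 1 := by
              have : ‖x - x₀‖ ≤ 1 := le_of_lt this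
              linarith
      exact hLx.trans this
    calc ‖(Complex.exp (Complex.I * m * θ) * W' n (Lmap θ x)) • Lmap θ‖
        = ‖Complex.exp (Complex.I * m * θ) * W' n (Lmap θ x)‖ * ‖Lmap θ‖ := norm_smul (Complex.exp (Complex.I * m * θ) * W' n (Lmap θ x)) (Lmap θ)
      _ ≤ ‖W' n (Lmap θ x)‖ * 1 := by
          rw [norm_mul, abs_expI, one_mul]
          exact mul_le_mul_of_nonneg_left (Lmap_norm_le θ) (norm_nonneg _)
      _ ≤ C := by rw [mul_one]; exact hC _ hxball
  · exact intervalIntegrable_const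
  · refine Filter.Eventually.of_forall fun θ => fun x _ => ?_
    have := (hasFDerivAt_inner n θ x).const_mul (Complex.exp (Complex.I * m * θ))
    rwa [smul_smul] at this

lemma znk_eq (n : ℕ) (k : ℤ) : Znk n k = fun z => ((-1:ℂ)^n/(2*π)) *
    ∫ θ in (0:ℝ)..(2*π),
      Complex.exp (Complex.I * (((n:ℤ) - 2*k : ℤ):ℂ) * θ) * W n (Lmap θ z) := by
  funext z
  unfold Znk
  congr 1
  apply intervalIntegral.integral_congr
  intro θ _
  simp only [Lmap_apply]
  congr 3
  push_cast
  ring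

lemma hasFDerivAt_Znk (n : ℕ) (k : ℤ) (z : ℂ) :
    HasFDerivAt (Znk n k) (((-1:ℂ)^n/(2*π)) • ∫ θ in (0:ℝ)..(2*π),
      (Complex.exp (Complex.I * (((n:ℤ) - 2*k : ℤ):ℂ) * θ) * W' n (Lmap θ z)) • Lmap θ) z := by
  rw [znk_eq]
  exact (hasFDerivAt_intZ n ((n:ℤ) - 2*k) z).const_mul _

lemma fderiv_Znk (n : ℕ) (k : ℤ) (z v : ℂ) :
    fderiv ℝ (Znk n k) z v = ((-1:ℂ)^n/(2*π)) *
      ∫ θ in (0:ℝ)..(2*π),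
        (Complex.exp (Complex.I * (((n:ℤ) - 2*k : ℤ):ℂ) * θ) * W' n (Lmap θ z)) * Lmap θ v := by
  rw [(hasFDerivAt_Znk n k z).fderiv]
  rw [ContinuousLinearMap.smul_apply]
  rw [ContinuousLinearMap.intervalIntegral_apply
    ((((cont_expI _).fun_mul (cont_W'Lmap n z)).fun_smul cont_Lmap).intervalIntegrable _ _)]
  simp only [ContinuousLinearMap.smul_apply, smul_eq_mul]

lemma expI_expand (θ : ℝ) :
    Complex.exp (Complex.I * θ) = ((Real.cos θ : ℝ) : ℂ) + ((Real.sin θ : ℝ) : ℂ) * Complex.I := by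
  rw [mul_comm, Complex.exp_mul_I, Complex.ofReal_cos, Complex.ofReal_sin]

lemma expI_expand' (θ : ℝ) :
    Complex.exp (-(Complex.I * θ)) = ((Real.cos θ : ℝ) : ℂ) - ((Real.sin θ : ℝ) : ℂ) * Complex.I := by
  have h : -(Complex.I * (θ:ℂ)) = ((-θ : ℝ) : ℂ) * Complex.I := by push_cast; ring
  rw [h, Complex.exp_mul_I]
  push_cast
  rw [Complex.cos_neg, Complex.sin_neg]
  ring

lemma Lmap_one (θ : ℝ) : Lmap θ 1 = ((Real.sin θ : ℝ) : ℂ) := by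
  rw [Lmap_apply, map_one, mul_one, expI_expand]
  simp

lemma Lmap_I (θ : ℝ) : Lmap θ Complex.I = -((Real.cos θ : ℝ) : ℂ) := by
  rw [Lmap_apply, Complex.conj_I, expI_expand]
  simp [Complex.mul_im]

lemma comb_bar (θ : ℝ) :
    Lmap θ 1 + Complex.I * Lmap θ Complex.I = -Complex.I * Complex.exp (Complex.I * θ) := by
  rw [Lmap_one, Lmap_I, expI_expand]
  ring_nf
  simp [Complex.I_sq]

lemma comb_z (θ : ℝ) :
    Lmap θ 1 - Complex.I * Lmap θ Complex.I = Complex.I * Complex.exp (-(Complex.I * θ)) := by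
  rw [Lmap_one, Lmap_I, expI_expand']
  ring_nf
  simp [Complex.I_sq]

lemma zbar_eq (n : ℕ) (k : ℤ) (z : ℂ) :
    wirtingerZbar (Znk n k) z = -(Complex.I/2) * (((-1:ℂ)^n/(2*π)) *
      ∫ θ in (0:ℝ)..(2*π),
        Complex.exp (Complex.I * (((n:ℤ) - 2*k + 1 : ℤ):ℂ) * θ) * W' n (Lmap θ z)) := by
  rw [wirtingerZbar, fderiv_Znk, fderiv_Znk]
  set m : ℤ := (n:ℤ) - 2*k with hm
  have ptws : ∀ θ : ℝ,
      Complex.exp (Complex.I * (m:ℂ) * θ) * W' n (Lmap θ z) * Lmap θ 1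
        + Complex.I * (Complex.exp (Complex.I * (m:ℂ) * θ) * W' n (Lmap θ z) * Lmap θ Complex.I)
      = -Complex.I * (Complex.exp (Complex.I * ((m + 1 : ℤ):ℂ) * θ) * W' n (Lmap θ z)) := by
    intro θ
    have hc : ((m + 1 : ℤ):ℂ) = (m:ℂ) + 1 := by push_cast; ring
    rw [hc, exp_shift]
    linear_combination (Complex.exp (Complex.I * (m:ℂ) * θ) * W' n (Lmap θ z)) * comb_bar θ
  have i1 : IntervalIntegrable
      (fun θ : ℝ => Complex.exp (Complex.I * (m:ℂ) * θ) * W' n (Lmap θ z) * Lmap θ 1)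
      MeasureTheory.volume 0 (2*π) :=
    (((cont_expI _).mul (cont_W'Lmap n z)).mul (cont_LmapApply 1)).intervalIntegrable _ _
  have i2 : IntervalIntegrable
      (fun θ : ℝ => Complex.I * (Complex.exp (Complex.I * (m:ℂ) * θ) * W' n (Lmap θ z) * Lmap θ Complex.I))
      MeasureTheory.volume 0 (2*π) :=
    (continuous_const.mul (((cont_expI _).mul (cont_W'Lmap n z)).mul
      (cont_LmapApply Complex.I))).intervalIntegrable _ _
  have key : (∫ θ in (0:ℝ)..(2*π),
        Complex.exp (Complex.I * (m:ℂ) * θ) * W' n (Lmap θ z) * Lmap θ 1)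
      + Complex.I * (∫ θ in (0:ℝ)..(2*π),
        Complex.exp (Complex.I * (m:ℂ) * θ) * W' n (Lmap θ z) * Lmap θ Complex.I)
      = -Complex.I * ∫ θ in (0:ℝ)..(2*π),
          Complex.exp (Complex.I * ((m + 1 : ℤ):ℂ) * θ) * W' n (Lmap θ z) := by
    rw [← intervalIntegral.integral_const_mul, ← intervalIntegral.integral_add i1 i2,
      ← intervalIntegral.integral_const_mul]
    exact intervalIntegral.integral_congr fun θ _ => ptws θ
  linear_combination ((-1:ℂ)^n/(2*π)/2) * key

lemma zz_eq (n : ℕ) (k : ℤ) (z : ℂ) :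
    wirtingerZ (Znk n k) z = (Complex.I/2) * (((-1:ℂ)^n/(2*π)) *
      ∫ θ in (0:ℝ)..(2*π),
        Complex.exp (Complex.I * (((n:ℤ) - 2*k - 1 : ℤ):ℂ) * θ) * W' n (Lmap θ z)) := by
  rw [wirtingerZ, fderiv_Znk, fderiv_Znk]
  set m : ℤ := (n:ℤ) - 2*k with hm
  have ptws : ∀ θ : ℝ,
      Complex.exp (Complex.I * (m:ℂ) * θ) * W' n (Lmap θ z) * Lmap θ 1
        - Complex.I * (Complex.exp (Complex.I * (m:ℂ) * θ) * W' n (Lmap θ z) * Lmap θ Complex.I)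
      = Complex.I * (Complex.exp (Complex.I * ((m - 1 : ℤ):ℂ) * θ) * W' n (Lmap θ z)) := by
    intro θ
    have hc : ((m - 1 : ℤ):ℂ) = (m:ℂ) - 1 := by push_cast; ring
    rw [hc, exp_shift']
    linear_combination (Complex.exp (Complex.I * (m:ℂ) * θ) * W' n (Lmap θ z)) * comb_z θ
  have i1 : IntervalIntegrable
      (fun θ : ℝ => Complex.exp (Complex.I * (m:ℂ) * θ) * W' n (Lmap θ z) * Lmap θ 1)
      MeasureTheory.volume 0 (2*π) :=
    (((cont_expI _).mul (cont_W'Lmap n z)).mul (cont_LmapApply 1)).intervalIntegrable _ _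
  have i2 : IntervalIntegrable
      (fun θ : ℝ => Complex.I * (Complex.exp (Complex.I * (m:ℂ) * θ) * W' n (Lmap θ z) * Lmap θ Complex.I))
      MeasureTheory.volume 0 (2*π) :=
    (continuous_const.mul (((cont_expI _).mul (cont_W'Lmap n z)).mul
      (cont_LmapApply Complex.I))).intervalIntegrable _ _
  have key : (∫ θ in (0:ℝ)..(2*π),
        Complex.exp (Complex.I * (m:ℂ) * θ) * W' n (Lmap θ z) * Lmap θ 1)
      - Complex.I * (∫ θ in (0:ℝ)..(2*π),
        Complex.exp (Complex.I * (m:ℂ) * θ) * W' n (Lmap θ z) * Lmap θ Complex.I)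
      = Complex.I * ∫ θ in (0:ℝ)..(2*π),
          Complex.exp (Complex.I * ((m - 1 : ℤ):ℂ) * θ) * W' n (Lmap θ z) := by
    rw [← intervalIntegral.integral_const_mul, ← intervalIntegral.integral_sub i1 i2,
      ← intervalIntegral.integral_const_mul]
    exact intervalIntegral.integral_congr fun θ _ => ptws θ
  linear_combination ((-1:ℂ)^n/(2*π)/2) * key

lemma intW'_L (n : ℕ) (z : ℂ) (m : ℤ) (hm : (n : ℤ) ≤ |m|) :
    (∫ θ in (0:ℝ)..(2*π), Complex.exp (Complex.I * (m:ℂ) * θ) * W' n (Lmap θ z)) = 0 := by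
  have := intW' n z m hm
  simpa [hW', Lmap_apply] using this


/-- The Zernike functions `Z_{n,k}` are real-differentiable, and satisfy the Cauchy–Riemann
system `∂_z̄ Z_{n,0} = 0`, `∂_z Z_{n,k} + ∂_z̄ Z_{n,k+1} = 0` for `0 ≤ k ≤ n-1`, and
`∂_z Z_{n,n} = 0`. -/
theorem Znk_CauchyRiemann (n : ℕ) :
    (∀ k : ℤ, Differentiable ℝ (Znk n k)) ∧
    (∀ z : ℂ, wirtingerZbar (Znk n 0) z = 0) ∧
    (∀ k : ℤ, 0 ≤ k → k ≤ (n : ℤ) - 1 →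
      ∀ z : ℂ, wirtingerZ (Znk n k) z + wirtingerZbar (Znk n (k + 1)) z = 0) ∧
    (∀ z : ℂ, wirtingerZ (Znk n n) z = 0) := by
  refine ⟨fun k z => (hasFDerivAt_Znk n k z).differentiableAt, ?_, ?_, ?_⟩
  · intro z
    rw [zbar_eq]
    rw [show ((n:ℤ) - 2*0 + 1 : ℤ) = (n:ℤ) + 1 by ring]
    rw [intW'_L n z ((n:ℤ)+1)
      (by rcases abs_cases ((n:ℤ)+1) with ⟨h1,h2⟩|⟨h1,h2⟩ <;> omega)]
    ring
  · intro k _ _ z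
    rw [zz_eq, zbar_eq]
    rw [show ((n:ℤ) - 2*(k+1) + 1 : ℤ) = (n:ℤ) - 2*k - 1 by ring]
    ring
  · intro z
    rw [zz_eq]
    rw [intW'_L n z ((n:ℤ) - 2*n - 1)
      (by rcases abs_cases ((n:ℤ) - 2*n - 1) with ⟨h1,h2⟩|⟨h1,h2⟩ <;> omega)]
    ring
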